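/- Let G be a finite group acting by ring automorphisms on a commutative ring B and let q : Spec B → Spec B^G be the induced map on prime spectra. Then q is a quotient map of topological spaces, i.e., a subset of Spec B^G is open if and only if its preimage under q is open. -/

import Mathlib

/-- The invariant subring `B^G` of a finite group acting by ring
automorphisms on a commutative ring `B`. -/
def fixedSubring (G B : Type*) [Group G] [CommRing B] [MulSemiringAction G B] :
    Subring B where
  carrier := {b | ∀ g : G, g • b = b}
  one_mem' := fun g => smul_one g
  mul_mem' := fun ha hb g => by rw [smul_mul', ha g, hb g]
  add_mem' := fun ha hb g => by rw [smul_add, ha g, hb g]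
  zero_mem' := fun g => smul_zero g
  neg_mem' := fun {a} ha g => by rw [smul_neg, ha g]


open Topology

theorem fixedSubring_subtype_isIntegral {G B : Type*} [Group G] [Finite G] [CommRing B]
    [MulSemiringAction G B] : ((fixedSubring G B).subtype).IsIntegral := by
  cases nonempty_fintype G
  intro x
  refine ⟨(prodXSubSMul G B x).toSubring (fixedSubring G B) ?_, ?_, ?_⟩
  · intro c hc g
    obtain ⟨n, _, hn⟩ := Polynomial.mem_coeffs_iff.1 hc
    exact hn ▸ prodXSubSMul.coeff G B x g n
  · refine (Polynomial.monic_toSubring _ _ _).2 ?_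
    exact prodXSubSMul.monic G B x
  · rw [Polynomial.eval₂_eq_eval_map]
    exact (congrArg (Polynomial.eval x) (Polynomial.map_toSubring _ _ _)).trans (prodXSubSMul.eval G B x)

/-- For a finite group action on `B`, the map `Spec B → Spec B^G` is a
quotient map of topological spaces. -/
theorem stmt_17 {G B : Type*} [Group G] [Finite G] [CommRing B]
    [MulSemiringAction G B] :
    IsQuotientMap
      (PrimeSpectrum.comap (fixedSubring G B).subtype :
        PrimeSpectrum B → PrimeSpectrum (fixedSubring G B)) := by
  have hInt := fixedSubring_subtype_isIntegral (G := G) (B := B)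
  refine IsClosedMap.isQuotientMap (PrimeSpectrum.isClosedMap_comap_of_isIntegral _ hInt)
    (PrimeSpectrum.continuous_comap _) ?_
  intro P
  letI := ((fixedSubring G B).subtype).toAlgebra
  haveI : Algebra.IsIntegral (fixedSubring G B) B := ⟨hInt⟩
  obtain ⟨Q, -, hQprime, hQ⟩ := Ideal.exists_ideal_over_prime_of_isIntegral P.asIdeal ⊥
    (fun x hx => by
      have hx0 : (x : B) = 0 := hx
      have hx1 : x = 0 := Subtype.ext hx0
      simp [hx1])
  exact ⟨⟨Q, hQprime⟩, PrimeSpectrum.ext hQ⟩
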